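/- Let ρ ∈ (0,1), σ > 0, SNR > 0, δ ∈ [0,1], and let N, K, i be positive integers with i ≤ K. Then ∫_ℝ φ(μ; 0, ρ/N) ∫_ℝ ∫_ℝ φ(x₂; (K−i)μ, (K−i)(1−ρ)/N) · ( ∫_ℝ φ(x₁; iμ, i(1−ρ)/N) · φ(y − σ(x₁ + x₂); 0, 1/SNR)^{1/(1+δ)} dx₁ )^{1+δ} dx₂ dy dμ = ( 1 + (1−ρ)·i·σ²·SNR / (N(1+δ)) )^{−δ/2}. (If K = i, the factor φ(x₂; 0, 0) is interpreted as a point mass at x₂ = 0, i.e. the x₂ integral is replaced by evaluation at x₂ = 0.) -/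

import Mathlib

open MeasureTheory Real

noncomputable section

/-- Density of the real Gaussian distribution `N(m, v)` with mean `m` and variance `v`. -/
def gauss (x m v : ℝ) : ℝ := (2 * Real.pi * v) ^ (-(1:ℝ)/2) * Real.exp (-(x - m)^2 / (2*v))

/-- The inner (`x₁`-integral) factor raised to the power `1 + δ`. -/
def inner6 (ρ σ SNR δ : ℝ) (N i : ℕ) (μ y x₂ : ℝ) : ℝ :=
  (∫ x₁ : ℝ, gauss x₁ (i*μ) (i*(1-ρ)/N) *
    gauss (y - σ*(x₁+x₂)) 0 (1/SNR) ^ ((1:ℝ)/(1+δ))) ^ (1+δ)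


lemma integral_rexp_quadratic {b : ℝ} (hb : b < 0) (c d : ℝ) :
    ∫ x : ℝ, Real.exp (b*x^2 + c*x + d)
      = Real.sqrt (π / -b) * Real.exp (d - c^2/(4*b)) := by
  have h := integral_cexp_quadratic (b := (b:ℂ)) (by simpa using hb) (c:ℂ) (d:ℂ)
  have hL : (∫ x : ℝ, Complex.exp ((b:ℂ) * x^2 + c*x + d))
      = ((∫ x : ℝ, Real.exp (b*x^2 + c*x + d) : ℝ) : ℂ) := by
    rw [show (fun x : ℝ => Complex.exp ((b:ℂ) * x^2 + c*x + d))
        = fun x : ℝ => ((Real.exp (b*x^2 + c*x + d) : ℝ) : ℂ) from ?_]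
    · exact integral_ofReal
    ext x
    push_cast [Complex.ofReal_exp]
    ring_nf
  have hnb : (0:ℝ) < -b := by linarith
  have hR : ((π:ℂ) / -(b:ℂ)) ^ (1/2 : ℂ) = ((Real.sqrt (π / -b) : ℝ) : ℂ) := by
    rw [Real.sqrt_eq_rpow]
    rw [show ((π:ℂ) / -(b:ℂ)) = ((π / -b : ℝ) : ℂ) by push_cast; ring]
    rw [show (1/2:ℂ) = ((1/2:ℝ):ℂ) by norm_num,
      ← Complex.ofReal_cpow (div_nonneg Real.pi_pos.le hnb.le)]
  rw [hL, hR] at h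
  have : ((d:ℂ) - c^2/(4*b)) = ((d - c^2/(4*b) : ℝ) : ℂ) := by push_cast; ring
  rw [this, ← Complex.ofReal_exp, ← Complex.ofReal_mul] at h
  exact_mod_cast h

lemma gauss_sqrt {v : ℝ} (hv : 0 < v) (x m : ℝ) :
    gauss x m v = Real.sqrt ((2*π*v)⁻¹) * Real.exp (-(x - m)^2 / (2*v)) := by
  rw [gauss, Real.sqrt_inv, Real.sqrt_eq_rpow, ← Real.rpow_neg (by positivity)]
  norm_num

lemma gauss_nonneg {v : ℝ} (hv : 0 < v) (x m : ℝ) : 0 ≤ gauss x m v := by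
  rw [gauss_sqrt hv]; positivity

lemma gauss_shift (x m v : ℝ) : gauss (x - m) 0 v = gauss x m v := by
  simp [gauss]

/-- normalization -/
lemma integral_gauss {v : ℝ} (hv : 0 < v) (m : ℝ) : ∫ x : ℝ, gauss x m v = 1 := by
  have key : ∀ x : ℝ, gauss x m v
      = Real.sqrt ((2*π*v)⁻¹) * Real.exp ((-(1/(2*v)))*x^2 + (m/v)*x + (-(m^2/(2*v)))) := by
    intro x
    rw [gauss_sqrt hv]
    congr 2
    field_simp
    ring
  simp only [key]
  rw [integral_const_mul,
    integral_rexp_quadratic (neg_lt_zero.mpr (by positivity)) _ _]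
  have h1 : (-(m ^ 2 / (2 * v)) - (m / v) ^ 2 / (4 * -(1 / (2 * v)))) = 0 := by
    field_simp
    ring
  rw [h1, Real.exp_zero, mul_one, ← Real.sqrt_mul (by positivity)]
  have h2 : (2*π*v)⁻¹ * (π / - -(1/(2*v))) = 1 := by
    field_simp
  rw [h2, Real.sqrt_one]

/-- convolution -/
lemma gauss_conv {v w s : ℝ} (hv : 0 < v) (hw : 0 < w) (hs : s ≠ 0) (m c : ℝ) :
    ∫ x : ℝ, gauss x m v * gauss (c - s*x) 0 w
      = gauss (c - s*m) 0 (s^2*v + w) := by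
  have hS : 0 < s^2*v + w := by positivity
  have hb : (-(1/(2*v) + s^2/(2*w))) < 0 := by
    have : 0 < 1/(2*v) + s^2/(2*w) := by positivity
    linarith
  have key : ∀ x : ℝ, gauss x m v * gauss (c - s*x) 0 w
      = (Real.sqrt ((2*π*v)⁻¹) * Real.sqrt ((2*π*w)⁻¹)) *
        Real.exp ((-(1/(2*v) + s^2/(2*w)))*x^2 + (m/v + s*c/w)*x
          + (-(m^2/(2*v) + c^2/(2*w)))) := by
    intro x
    rw [gauss_sqrt hv, gauss_sqrt hw, mul_mul_mul_comm, ← Real.exp_add]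
    congr 2
    field_simp
    ring
  simp only [key]
  rw [integral_const_mul, integral_rexp_quadratic hb _ _, gauss_sqrt hS]
  have hexp : (-(m^2/(2*v) + c^2/(2*w)) - (m/v + s*c/w)^2 / (4 * -(1/(2*v) + s^2/(2*w))))
      = -(c - s*m - 0)^2 / (2*(s^2*v + w)) := by
    have h2 : (4 * -(1/(2*v) + s^2/(2*w))) = -(2*(s^2*v + w))/(v*w) := by
      field_simp
      ring
    rw [h2]
    field_simp
    ring
  rw [hexp]
  have hc : √((2*π*v)⁻¹) * √((2*π*w)⁻¹) * √(π / - -(1/(2*v) + s^2/(2*w)))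
      = √((2*π*(s^2*v + w))⁻¹) := by
    rw [← Real.sqrt_mul (by positivity), ← Real.sqrt_mul (by positivity)]
    congr 1
    have h1 : ((1:ℝ)/(2*v) + s^2/(2*w)) ≠ 0 := by positivity
    rw [neg_neg]
    field_simp
    ring
  rw [← hc]
  ring

lemma gauss_rpow {v p : ℝ} (hv : 0 < v) (hp : 0 < p) (z m : ℝ) :
    gauss z m v ^ p = ((2*π*v) ^ (-p/2) * (2*π*(v/p)) ^ ((1:ℝ)/2)) * gauss z m (v/p) := by
  have h2 : (0:ℝ) < 2*π*(v/p) := by positivity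
  rw [gauss, gauss, Real.mul_rpow (by positivity) (Real.exp_pos _).le,
    ← Real.rpow_mul (by positivity : (0:ℝ) ≤ 2*π*v), ← Real.exp_mul]
  have e1 : (-(1:ℝ)/2) * p = -p/2 := by ring
  have e2 : -(z - m)^2 / (2*v) * p = -(z - m)^2 / (2*(v/p)) := by
    field_simp
  rw [e1, e2]
  rw [mul_assoc, mul_assoc, ← mul_assoc ((2*π*(v/p)) ^ ((1:ℝ)/2)), ← Real.rpow_add h2]
  norm_num

def B6 (SNR δ : ℝ) : ℝ := (1/SNR)/((1:ℝ)/(1+δ))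

def V6 (ρ σ SNR δ : ℝ) (N i : ℕ) : ℝ := σ^2*((i:ℝ)*(1-ρ)/(N:ℝ)) + B6 SNR δ

def W6 (ρ σ SNR δ : ℝ) (N i : ℕ) : ℝ := V6 ρ σ SNR δ N i / (1+δ)

def C6 (ρ σ SNR δ : ℝ) (N i : ℕ) : ℝ :=
  ((2*π*(1/SNR)) ^ (-((1:ℝ)/(1+δ))/2) * (2*π*(B6 SNR δ)) ^ ((1:ℝ)/2)) ^ (1+δ) *
    ((2*π*(V6 ρ σ SNR δ N i)) ^ (-(1+δ)/2) * (2*π*(W6 ρ σ SNR δ N i)) ^ ((1:ℝ)/2))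

section main
variable {ρ σ SNR δ : ℝ} {N K i : ℕ}

lemma inner6_eq (hρ1 : ρ < 1) (hσ : 0 < σ) (hSNR : 0 < SNR) (hδ0 : 0 ≤ δ)
    (hN : 1 ≤ N) (hi1 : 1 ≤ i) (μ y x₂ : ℝ) :
    inner6 ρ σ SNR δ N i μ y x₂ =
      C6 ρ σ SNR δ N i * gauss (y - σ*x₂ - σ*((i:ℝ)*μ)) 0 (W6 ρ σ SNR δ N i) := by
  have h1δ : (0:ℝ) < 1 + δ := by linarith
  have hp : (0:ℝ) < (1:ℝ)/(1+δ) := by positivity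
  have hN0 : (0:ℝ) < (N:ℝ) := by exact_mod_cast hN
  have hi0 : (0:ℝ) < (i:ℝ) := by exact_mod_cast hi1
  have h1ρ : (0:ℝ) < 1 - ρ := by linarith
  have haa : (0:ℝ) < (i:ℝ)*(1-ρ)/(N:ℝ) := by positivity
  have hbb : (0:ℝ) < 1/SNR := by positivity
  have hB : (0:ℝ) < B6 SNR δ := by
    rw [B6]; positivity
  have hV : (0:ℝ) < V6 ρ σ SNR δ N i := by
    rw [V6]; positivity
  have hW : (0:ℝ) < W6 ρ σ SNR δ N i := by
    rw [W6]; positivity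
  have e1 : ∀ x₁ : ℝ, gauss x₁ ((i:ℝ)*μ) ((i:ℝ)*(1-ρ)/(N:ℝ)) *
      gauss (y - σ*(x₁+x₂)) 0 (1/SNR) ^ ((1:ℝ)/(1+δ))
      = ((2*π*(1/SNR)) ^ (-((1:ℝ)/(1+δ))/2) * (2*π*(B6 SNR δ)) ^ ((1:ℝ)/2)) *
        (gauss x₁ ((i:ℝ)*μ) ((i:ℝ)*(1-ρ)/(N:ℝ)) * gauss ((y - σ*x₂) - σ*x₁) 0 (B6 SNR δ)) := by
    intro x₁
    rw [show y - σ*(x₁+x₂) = (y - σ*x₂) - σ*x₁ by ring, gauss_rpow hbb hp, B6]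
    ring
  rw [inner6]
  simp only [e1]
  rw [integral_const_mul, gauss_conv haa hB hσ.ne',
    Real.mul_rpow (by positivity) (gauss_nonneg (by positivity) _ _),
    gauss_rpow (by rw [← V6]; exact hV) h1δ]
  rw [C6, V6, W6, V6]
  ring_nf

lemma C6_eq (hρ1 : ρ < 1) (hσ : 0 < σ) (hSNR : 0 < SNR) (hδ0 : 0 ≤ δ)
    (hN : 1 ≤ N) (hi1 : 1 ≤ i) :
    C6 ρ σ SNR δ N i = (1 + (1-ρ) * (i:ℝ) * σ^2 * SNR / ((N:ℝ) * (1+δ))) ^ (-δ/2) := by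
  have h1δ : (0:ℝ) < 1 + δ := by linarith
  have hN0 : (0:ℝ) < (N:ℝ) := by exact_mod_cast hN
  have hi0 : (0:ℝ) < (i:ℝ) := by exact_mod_cast hi1
  have h1ρ : (0:ℝ) < 1 - ρ := by linarith
  have hP : (0:ℝ) < 2*π*(1/SNR) := by positivity
  have hB : (0:ℝ) < B6 SNR δ := by rw [B6]; positivity
  have hV : (0:ℝ) < V6 ρ σ SNR δ N i := by rw [V6, B6]; positivity
  have hW : (0:ℝ) < W6 ρ σ SNR δ N i := by rw [W6]; positivity
  have hPB : (0:ℝ) < 2*π*(B6 SNR δ) := by positivity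
  have hPV : (0:ℝ) < 2*π*(V6 ρ σ SNR δ N i) := by positivity
  have hPW : (0:ℝ) < 2*π*(W6 ρ σ SNR δ N i) := by positivity
  have hX : (0:ℝ) < 1 + (1-ρ) * (i:ℝ) * σ^2 * SNR / ((N:ℝ) * (1+δ)) := by positivity
  -- express B6 and W6
  have hB6 : (2*π*(B6 SNR δ)) = (2*π*(1/SNR)) * (1+δ) := by
    rw [B6]; field_simp
  have hW6 : (2*π*(W6 ρ σ SNR δ N i)) = (2*π*(V6 ρ σ SNR δ N i)) / (1+δ) := by
    rw [W6]; ring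
  have hXlog : Real.log (1 + (1-ρ) * (i:ℝ) * σ^2 * SNR / ((N:ℝ) * (1+δ)))
      = Real.log (2*π*(V6 ρ σ SNR δ N i)) - Real.log (2*π*(1/SNR)) - Real.log (1+δ) := by
    rw [sub_sub, ← Real.log_mul hP.ne' h1δ.ne', ← Real.log_div hPV.ne' (by positivity)]
    congr 1
    rw [V6, B6]
    field_simp
    ring
  rw [C6, hB6, hW6]
  rw [Real.rpow_def_of_pos hP, Real.rpow_def_of_pos (by positivity : (0:ℝ) < (2*π*(1/SNR))*(1+δ)),
    ← Real.exp_add, ← Real.exp_mul,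
    Real.rpow_def_of_pos hPV, Real.rpow_def_of_pos (by positivity : (0:ℝ) < (2*π*(V6 ρ σ SNR δ N i))/(1+δ)),
    ← Real.exp_add, ← Real.exp_add, Real.rpow_def_of_pos hX]
  congr 1
  rw [Real.log_mul hP.ne' h1δ.ne', Real.log_div hPV.ne' h1δ.ne', hXlog]
  field_simp
  ring

end main

theorem statement6 (ρ σ SNR δ : ℝ) (hρ : ρ ∈ Set.Ioo (0:ℝ) 1) (hσ : 0 < σ)
    (hSNR : 0 < SNR) (hδ : δ ∈ Set.Icc (0:ℝ) 1)
    (N K i : ℕ) (hN : 1 ≤ N) (hK : 1 ≤ K) (hi1 : 1 ≤ i) (hiK : i ≤ K) :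
    (∫ μ : ℝ, gauss μ 0 (ρ/N) * ∫ y : ℝ,
      (if i < K then
        ∫ x₂ : ℝ, gauss x₂ (((K - i : ℕ)) * μ) (((K - i : ℕ)) * (1-ρ)/N) *
          inner6 ρ σ SNR δ N i μ y x₂
      else inner6 ρ σ SNR δ N i μ y 0)) =
    (1 + (1-ρ) * i * σ^2 * SNR / (N * (1+δ))) ^ (-δ/2) := by
  obtain ⟨hρ0, hρ1⟩ := hρ
  obtain ⟨hδ0, hδ1⟩ := hδ
  have h1δ : (0:ℝ) < 1 + δ := by linarith
  have hN0 : (0:ℝ) < (N:ℝ) := by exact_mod_cast hN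
  have hi0 : (0:ℝ) < (i:ℝ) := by exact_mod_cast hi1
  have h1ρ : (0:ℝ) < 1 - ρ := by linarith
  have hW : (0:ℝ) < W6 ρ σ SNR δ N i := by rw [W6, V6, B6]; positivity
  have hρN : (0:ℝ) < ρ/(N:ℝ) := by positivity
  have hy : ∀ μ : ℝ, (∫ y : ℝ,
      (if i < K then
        ∫ x₂ : ℝ, gauss x₂ (((K - i : ℕ)) * μ) (((K - i : ℕ)) * (1-ρ)/N) *
          inner6 ρ σ SNR δ N i μ y x₂
      else inner6 ρ σ SNR δ N i μ y 0)) = C6 ρ σ SNR δ N i := by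
    intro μ
    by_cases hKi : i < K
    · simp only [if_pos hKi]
      have hKi0 : (0:ℝ) < ((K-i : ℕ):ℝ) := by
        exact_mod_cast Nat.sub_pos_of_lt hKi
      have hc : (0:ℝ) < ((K-i : ℕ):ℝ)*(1-ρ)/(N:ℝ) := by positivity
      have e2 : ∀ y x₂ : ℝ, gauss x₂ (((K - i : ℕ)) * μ) (((K - i : ℕ)) * (1-ρ)/N) *
            inner6 ρ σ SNR δ N i μ y x₂
          = C6 ρ σ SNR δ N i * (gauss x₂ (((K - i : ℕ):ℝ) * μ) (((K - i : ℕ):ℝ) * (1-ρ)/N) *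
              gauss ((y - σ*((i:ℝ)*μ)) - σ*x₂) 0 (W6 ρ σ SNR δ N i)) := by
        intro y x₂
        rw [inner6_eq hρ1 hσ hSNR hδ0 hN hi1,
          show y - σ*x₂ - σ*((i:ℝ)*μ) = (y - σ*((i:ℝ)*μ)) - σ*x₂ by ring]
        ring
      simp only [e2]
      have e3 : ∀ y : ℝ, (∫ x₂ : ℝ, C6 ρ σ SNR δ N i *
            (gauss x₂ (((K - i : ℕ):ℝ) * μ) (((K - i : ℕ):ℝ) * (1-ρ)/N) *
              gauss ((y - σ*((i:ℝ)*μ)) - σ*x₂) 0 (W6 ρ σ SNR δ N i)))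
          = C6 ρ σ SNR δ N i *
              gauss (y - (σ*((i:ℝ)*μ) + σ*(((K - i : ℕ):ℝ)*μ)))
                (0:ℝ) (σ^2*(((K - i : ℕ):ℝ)*(1-ρ)/N) + W6 ρ σ SNR δ N i) := by
        intro y
        rw [integral_const_mul, gauss_conv hc hW hσ.ne',
          show (y - σ*((i:ℝ)*μ)) - σ*(((K - i : ℕ):ℝ)*μ)
            = y - (σ*((i:ℝ)*μ) + σ*(((K - i : ℕ):ℝ)*μ)) by ring]
      simp only [e3]
      simp only [gauss_shift]
      rw [integral_const_mul, integral_gauss (by positivity), mul_one]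
    · simp only [if_neg hKi]
      have e2 : ∀ y : ℝ, inner6 ρ σ SNR δ N i μ y 0
          = C6 ρ σ SNR δ N i * gauss y (σ*0 + σ*((i:ℝ)*μ)) (W6 ρ σ SNR δ N i) := by
        intro y
        rw [inner6_eq hρ1 hσ hSNR hδ0 hN hi1,
          show y - σ*0 - σ*((i:ℝ)*μ) = y - (σ*0 + σ*((i:ℝ)*μ)) by ring, gauss_shift]
      simp only [e2]
      rw [integral_const_mul, integral_gauss hW, mul_one]
  simp only [hy]
  rw [integral_mul_const, integral_gauss hρN, one_mul, C6_eq hρ1 hσ hSNR hδ0 hN hi1]
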